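/- If κ is a Ramsey cardinal, then Pr(κ) holds: every algebra M = (M, F) with |M| = κ and |F| < κ has a free subset of cardinality κ. -/

import Mathlib

open Cardinal

universe u

/-- An algebra: a carrier `M` with a set of finitary operations (for each arity `n`,
a set of `n`-ary functions). -/
structure FAlg (M : Type u) where
  ops : ∀ n : ℕ, Set ((Fin n → M) → M)

/-- `S` is a subalgebra: closed under all operations. -/
def FAlg.IsSubalg {M : Type u} (A : FAlg M) (S : Set M) : Prop :=
  ∀ ⦃n : ℕ⦄, ∀ f ∈ A.ops n, ∀ x : Fin n → M, (∀ i, x i ∈ S) → f x ∈ S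

/-- The least subalgebra containing `B`. -/
def FAlg.Cl {M : Type u} (A : FAlg M) (B : Set M) : Set M :=
  ⋂₀ {S : Set M | A.IsSubalg S ∧ B ⊆ S}

/-- `B` is free for the algebra `A`. -/
def FAlg.IsFree {M : Type u} (A : FAlg M) (B : Set M) : Prop :=
  ∀ a ∈ B, a ∉ A.Cl (B \ {a})

/-- The number of operations of the algebra. -/
def FAlg.opsCard {M : Type u} (A : FAlg M) : Cardinal.{u} :=
  #(Σ n : ℕ, ↥(A.ops n))

/-- `Pr κ`: every algebra on a set of size `κ` with fewer than `κ` operations has a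
free subset of cardinality `κ`. -/
def Pr (κ : Cardinal.{u}) : Prop :=
  ∀ (M : Type u) (A : FAlg M), #M = κ → A.opsCard < κ →
    ∃ B : Set M, A.IsFree B ∧ #B = κ

/-- `κ` is Ramsey: `κ → (κ)^{<ω}_2`, i.e. every 2-colouring of the finite subsets of a
set of size `κ` has a homogeneous set of size `κ` (homogeneous for each size of subset). -/
def IsRamsey (κ : Cardinal.{u}) : Prop :=
  ∀ c : Finset κ.ord.ToType → Bool,
    ∃ H : Set κ.ord.ToType, #H = κ ∧
      ∀ s t : Finset κ.ord.ToType, ↑s ⊆ H → ↑t ⊆ H →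
        s.card = t.card → c s = c t

namespace FSP

open Ordinal Set FirstOrder FirstOrder.Language

noncomputable section

variable {κ : Cardinal.{u}}

/-! ### The language of an algebra and terms -/

def Lg {M : Type u} (A : FAlg M) : FirstOrder.Language.{u,0} :=
  ⟨fun n => ↥(A.ops n), fun _ => Empty⟩

instance LgStr {M : Type u} (A : FAlg M) : (Lg A).Structure M where
  funMap := fun {_} f x => f.1 x
  RelMap := fun {_} r _ => r.elim

lemma realize_agree {M : Type u} (A : FAlg M) {α : Type*} [DecidableEq α]
    (t : (Lg A).Term α) {v v' : α → M}
    (h : ∀ i ∈ t.varFinset, v i = v' i) : t.realize v = t.realize v' := by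
  induction t with
  | var i => exact h i (by simp)
  | func f ts ih =>
    rw [Term.realize_func, Term.realize_func]
    congr 1
    funext i
    refine ih i fun j hj => h j ?_
    simp only [Term.varFinset, Finset.mem_biUnion]
    exact ⟨i, Finset.mem_univ i, hj⟩

lemma varFinset_relabel {M : Type u} (A : FAlg M) {α β : Type*} [DecidableEq α] [DecidableEq β]
    (t : (Lg A).Term α) (ρ : α → β) :
    (t.relabel ρ).varFinset ⊆ t.varFinset.image ρ := by
  induction t with
  | var i => simp [Term.relabel, Term.varFinset]
  | func f ts ih =>
    intro x hx
    simp only [Term.relabel, Term.varFinset, Finset.mem_biUnion, Finset.mem_univ,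
      true_and] at hx
    obtain ⟨i, hi⟩ := hx
    have := ih i hi
    simp only [Finset.mem_image] at this ⊢
    obtain ⟨y, hy, rfl⟩ := this
    refine ⟨y, ?_, rfl⟩
    simp only [Term.varFinset, Finset.mem_biUnion, Finset.mem_univ, true_and]
    exact ⟨i, hy⟩

lemma mem_cl_term {M : Type u} (A : FAlg M) {B : Set M} {a : M} (ha : a ∈ A.Cl B) :
    ∃ t : (Lg A).Term ↥B, t.realize (Subtype.val : ↥B → M) = a := by
  have hsub : A.Cl B ⊆ {x | ∃ t : (Lg A).Term ↥B, t.realize (Subtype.val : ↥B → M) = x} := by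
    refine Set.sInter_subset_of_mem ⟨?_, ?_⟩
    · intro n f hf x hx
      choose ts hts using hx
      refine ⟨Term.func (⟨f, hf⟩ : (Lg A).Functions n) ts, ?_⟩
      show f _ = f x
      congr 1
      funext i
      exact hts i
    · intro b hb
      exact ⟨Term.var ⟨b, hb⟩, rfl⟩
  exact hsub ha

lemma mk_term_lt {M : Type u} (A : FAlg M) (hops : A.opsCard < κ) (hinf : ℵ₀ < κ) :
    #((Lg A).Term ℕ) < κ := by
  refine lt_of_le_of_lt (Term.card_le) ?_
  have h1 : #(ℕ ⊕ (Σ i, (Lg A).Functions i)) = ℵ₀ + A.opsCard := by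
    rw [mk_sum]
    have h2 : #(Σ i, (Lg A).Functions i) = A.opsCard := rfl
    rw [h2, mk_nat, lift_aleph0, Cardinal.lift_uzero]
  rw [h1]
  exact max_lt hinf (Cardinal.add_lt_of_lt hinf.le hinf hops)

/-! ### Basic facts about `κ.ord.ToType` -/

lemma mk_OT (κ : Cardinal.{u}) : #κ.ord.ToType = κ := by
  rw [mk_toType, card_ord]

lemma mk_Iic_lt (hκ : ℵ₀ ≤ κ) (x : κ.ord.ToType) : #(Set.Iic x) < κ := by
  rw [← Set.Iio_union_right]
  refine lt_of_le_of_lt (mk_union_le _ _) ?_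
  exact Cardinal.add_lt_of_lt hκ (Cardinal.mk_Iio_ord_toType x)
    (lt_of_lt_of_le (by simp) hκ)

lemma exists_strictMono_into (hκ : ℵ₀ ≤ κ) {H : Set κ.ord.ToType} (hH : #H = κ) :
    ∃ f : κ.ord.ToType → κ.ord.ToType, StrictMono f ∧ ∀ x, f x ∈ H := by
  haveI : IsWellOrder κ.ord.ToType ((· < ·) : κ.ord.ToType → κ.ord.ToType → Prop) :=
    isWellOrder_lt
  have hle : Ordinal.type ((· < ·) : κ.ord.ToType → κ.ord.ToType → Prop) ≤
      Ordinal.type (Subrel ((· < ·) : κ.ord.ToType → κ.ord.ToType → Prop) (· ∈ H)) := by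
    rw [type_toType]
    rw [← Ordinal.card_type (Subrel ((· < ·) : κ.ord.ToType → κ.ord.ToType → Prop) (· ∈ H))] at hH
    exact Cardinal.ord_le.2 hH.symm.le
  obtain ⟨e⟩ := Ordinal.type_le_iff.1 hle
  refine ⟨fun x => (e x).1, fun x y hxy => ?_, fun x => (e x).2⟩
  exact e.map_rel_iff.2 hxy

lemma exists_blocks (hκ : ℵ₀ ≤ κ) (k : ℕ) :
    ∃ β : κ.ord.ToType → Fin (k + 1) → κ.ord.ToType,
      (∀ x, StrictMono (β x)) ∧ ∀ x y, x < y → ∀ i j, β x i < β y j := by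
  haveI : IsWellOrder κ.ord.ToType ((· < ·) : κ.ord.ToType → κ.ord.ToType → Prop) :=
    isWellOrder_lt
  set F : Type u := ULift.{u} (Fin (k + 1)) with hF
  set rF : F → F → Prop := fun a b => a.down < b.down with hrF
  haveI : IsWellOrder (Fin (k+1)) ((· < ·) : Fin (k+1) → Fin (k+1) → Prop) := inferInstance
  haveI : IsWellOrder F rF := RelEmbedding.isWellOrder
    (⟨Equiv.ulift.toEmbedding, Iff.rfl⟩ : rF ↪r ((· < ·) : Fin (k+1) → Fin (k+1) → Prop))
  have htF : Ordinal.type rF = (k + 1 : ℕ) := by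
    rw [Ordinal.type_fintype]
    simp [hF]
  have hle : Ordinal.type
      (Prod.Lex ((· < ·) : κ.ord.ToType → κ.ord.ToType → Prop) rF) ≤
      Ordinal.type ((· < ·) : κ.ord.ToType → κ.ord.ToType → Prop) := by
    rw [Ordinal.type_prod_lex, type_toType, htF]
    refine (Ordinal.mul_le_iff_of_isSuccLimit (Cardinal.isSuccLimit_ord hκ)).2 fun b hb => le_of_lt ?_
    rw [Cardinal.lt_ord] at hb ⊢
    rw [Ordinal.card_mul, Ordinal.card_nat]
    exact Cardinal.mul_lt_of_lt hκ (lt_of_lt_of_le (Cardinal.nat_lt_aleph0 _) hκ) hb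
  obtain ⟨e⟩ := Ordinal.type_le_iff.1 hle
  refine ⟨fun x i => e (x, ULift.up i), fun x i j hij => ?_, fun x y hxy i j => ?_⟩
  · exact e.map_rel_iff.2 (Prod.Lex.right x hij)
  · exact e.map_rel_iff.2 (Prod.Lex.left _ _ hxy)

/-! ### Many colours from Boolean Ramsey -/

lemma sort_union {α : Type*} [LinearOrder α] {u v : Finset α}
    (huv : ∀ a ∈ u, ∀ b ∈ v, a < b) :
    (u ∪ v).sort (· ≤ ·) = u.sort (· ≤ ·) ++ v.sort (· ≤ ·) := by
  have hdisj : Disjoint u v := by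
    rw [Finset.disjoint_left]
    intro a ha hav
    exact absurd (huv a ha a hav) (lt_irrefl a)
  refine (fun hp hs => List.Perm.eq_of_pairwise' (Finset.pairwise_sort _ _) hs hp) ?_ ?_
  · rw [← Multiset.coe_eq_coe]
    change ((u ∪ v).sort (· ≤ ·) : Multiset α) =
      ((u.sort (· ≤ ·) : List α) : Multiset α) + (v.sort (· ≤ ·) : Multiset α)
    rw [Finset.sort_eq, Finset.sort_eq, Finset.sort_eq]
    rw [← Finset.disjUnion_eq_union u v hdisj]
    rfl
  · rw [List.pairwise_append]
    refine ⟨Finset.pairwise_sort _ _, Finset.pairwise_sort _ _, fun a ha b hb => ?_⟩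
    exact le_of_lt (huv a ((Finset.mem_sort _).1 ha) b ((Finset.mem_sort _).1 hb))

variable {C : Type u}

open Classical in
def dcol (c : Finset κ.ord.ToType → C) (s : Finset κ.ord.ToType) : Bool :=
  decide (c (((s.sort (· ≤ ·)).take (s.card / 2)).toFinset) =
    c (((s.sort (· ≤ ·)).drop (s.card / 2)).toFinset))

lemma dcol_iff (c : Finset κ.ord.ToType → C) {u v : Finset κ.ord.ToType}
    (huv : ∀ a ∈ u, ∀ b ∈ v, a < b) (hcard : u.card = v.card) :
    dcol c (u ∪ v) = true ↔ c u = c v := by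
  classical
  have hdisj : Disjoint u v := by
    rw [Finset.disjoint_left]
    intro a ha hav
    exact absurd (huv a ha a hav) (lt_irrefl a)
  have hsort := sort_union huv
  have hc : (u ∪ v).card = u.card + v.card := Finset.card_union_of_disjoint hdisj
  have hhalf : (u ∪ v).card / 2 = u.card := by omega
  have hlen : (u.sort (· ≤ ·)).length = u.card := Finset.length_sort _
  rw [dcol, hsort, hhalf, List.take_left' hlen, List.drop_left' hlen,
    Finset.sort_toFinset, Finset.sort_toFinset, decide_eq_true_eq]

lemma exists_homog_many (hκ : IsRamsey κ) (hinf : ℵ₀ ≤ κ) (hC : #C < κ)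
    (c : Finset κ.ord.ToType → C) :
    ∃ H : Set κ.ord.ToType, #H = κ ∧ ∀ s t : Finset κ.ord.ToType, ↑s ⊆ H → ↑t ⊆ H →
      s.card = t.card → c s = c t := by
  classical
  obtain ⟨H, hH, hhom⟩ := hκ (dcol c)
  have hHinf : H.Infinite := by
    rw [← Set.infinite_coe_iff, infinite_iff, hH]
    exact hinf
  have key1 : ∀ u v : Finset κ.ord.ToType, ↑u ⊆ H → ↑v ⊆ H → u.card = v.card →
      (∀ a ∈ u, ∀ b ∈ v, a < b) → c u = c v := by
    intro u v hu hv hcard hlt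
    rcases Nat.eq_zero_or_pos u.card with h0 | hpos
    · have hv0 : v = ∅ := Finset.card_eq_zero.1 (by omega)
      have hu0 : u = ∅ := Finset.card_eq_zero.1 h0
      rw [hu0, hv0]
    by_contra hne
    have hduv : dcol c (u ∪ v) = false := by
      rw [← Bool.not_eq_true, dcol_iff c hlt hcard]
      exact hne
    obtain ⟨k, hk⟩ : ∃ k, u.card = k + 1 := ⟨u.card - 1, by omega⟩
    obtain ⟨f, hf, hfH⟩ := exists_strictMono_into hinf hH
    obtain ⟨β, hβ1, hβ2⟩ := exists_blocks hinf (κ := κ) k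
    set blk : κ.ord.ToType → Finset κ.ord.ToType :=
      fun x => Finset.image (fun i => f (β x i)) Finset.univ with hblk
    have hblkcard : ∀ x, (blk x).card = k + 1 := by
      intro x
      have hinj : Function.Injective fun i => f (β x i) :=
        fun i j hij => (hβ1 x).injective (hf.injective hij)
      rw [hblk]
      rw [Finset.card_image_of_injective _ hinj, Finset.card_univ, Fintype.card_fin]
    have hblkH : ∀ x, ↑(blk x) ⊆ H := by
      intro x a ha
      simp only [hblk, Finset.coe_image, Set.mem_image] at ha
      obtain ⟨i, _, rfl⟩ := ha
      exact hfH _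
    have hblklt : ∀ x y, x < y → ∀ a ∈ blk x, ∀ b ∈ blk y, a < b := by
      intro x y hxy a ha b hb
      simp only [hblk, Finset.mem_image] at ha hb
      obtain ⟨i, _, rfl⟩ := ha
      obtain ⟨j, _, rfl⟩ := hb
      exact hf (hβ2 x y hxy i j)
    have hblkne : ∀ x y, x < y → c (blk x) ≠ c (blk y) := by
      intro x y hxy
      have hd : dcol c (blk x ∪ blk y) = false := by
        rw [hhom (blk x ∪ blk y) (u ∪ v) ?_ ?_ ?_]
        · exact hduv
        · rw [Finset.coe_union]
          exact Set.union_subset (hblkH x) (hblkH y)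
        · rw [Finset.coe_union]
          exact Set.union_subset hu hv
        · have hd1 : Disjoint (blk x) (blk y) := by
            rw [Finset.disjoint_left]
            intro a ha hay
            exact absurd (hblklt x y hxy a ha a hay) (lt_irrefl a)
          have hd2 : Disjoint u v := by
            rw [Finset.disjoint_left]
            intro a ha hav
            exact absurd (hlt a ha a hav) (lt_irrefl a)
          rw [Finset.card_union_of_disjoint hd1, Finset.card_union_of_disjoint hd2,
            hblkcard, hblkcard, ← hcard, hk]
      rw [← Bool.not_eq_true, dcol_iff c (hblklt x y hxy) (by rw [hblkcard, hblkcard])] at hd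
      exact hd
    have hinj : Function.Injective fun x => c (blk x) := by
      intro x y hxy
      by_contra hne'
      rcases lt_or_gt_of_ne hne' with h | h
      · exact hblkne x y h hxy
      · exact hblkne y x h hxy.symm
    have : κ ≤ #C := by
      rw [← mk_OT κ]
      exact Cardinal.mk_le_of_injective hinj
    exact absurd this (not_le.2 hC)
  refine ⟨H, hH, fun s t hs ht hcard => ?_⟩
  rcases Nat.eq_zero_or_pos s.card with h0 | hpos
  · have ht0 : t = ∅ := Finset.card_eq_zero.1 (by omega)
    have hs0 : s = ∅ := Finset.card_eq_zero.1 h0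
    rw [hs0, ht0]
  obtain ⟨a₀, ha₀⟩ := Finset.card_pos.1 hpos
  have hne : (s ∪ t).Nonempty := ⟨a₀, Finset.mem_union_left _ ha₀⟩
  set x₀ := (s ∪ t).max' hne with hx₀
  have hinf2 : (H \ Set.Iic x₀).Infinite := by
    rw [← Set.infinite_coe_iff, infinite_iff]
    by_contra hlt2
    push_neg at hlt2
    have h1 : #H ≤ #(H \ Set.Iic x₀ : Set _) + #(Set.Iic x₀) := by
      refine le_trans (Cardinal.mk_le_mk_of_subset ?_) (Cardinal.mk_union_le _ _)
      intro a ha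
      by_cases h : a ∈ Set.Iic x₀
      · exact Or.inr h
      · exact Or.inl ⟨ha, h⟩
    have h2 : #(H \ Set.Iic x₀ : Set _) + #(Set.Iic x₀) < κ :=
      Cardinal.add_lt_of_lt hinf (lt_of_lt_of_le hlt2 hinf) (mk_Iic_lt hinf x₀)
    rw [hH] at h1
    exact absurd (lt_of_le_of_lt h1 h2) (lt_irrefl κ)
  obtain ⟨w, hwsub, hwcard⟩ := hinf2.exists_subset_card_eq s.card
  have hwH : ↑w ⊆ H := fun a ha => (hwsub ha).1
  have hwlt : ∀ z : Finset κ.ord.ToType, z ⊆ s ∪ t → ∀ a ∈ z, ∀ b ∈ w, a < b := by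
    intro z hz a ha b hb
    have h1 : a ≤ x₀ := Finset.le_max' _ a (hz ha)
    have h2 : ¬ b ≤ x₀ := (hwsub hb).2
    exact lt_of_le_of_lt h1 (lt_of_not_ge h2)
  have h1 : c s = c w := key1 s w hs hwH hwcard.symm
    (hwlt s Finset.subset_union_left)
  have h2 : c t = c w := key1 t w ht hwH (by omega) (hwlt t Finset.subset_union_right)
  rw [h1, h2]

lemma pr_of_le_one (h : κ ≤ 1) : Pr κ := by
  intro M A hM hops
  rcases lt_or_eq_of_le h with h1 | h1
  · rw [Cardinal.lt_one_iff_zero] at h1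
    refine ⟨∅, fun a ha => absurd ha (by simp), by simp [h1]⟩
  · have hops0 : A.opsCard = 0 := by
      rw [← Cardinal.lt_one_iff_zero]
      exact lt_of_lt_of_le hops h1.le
    have hempty : IsEmpty (Σ n : ℕ, ↥(A.ops n)) := Cardinal.mk_eq_zero_iff.1 hops0
    have hsub : Subsingleton M := by
      rw [← Cardinal.le_one_iff_subsingleton, hM, h1]
    refine ⟨Set.univ, fun a _ hcl => ?_, by rw [mk_univ, hM]⟩
    · have hS : A.IsSubalg ∅ ∧ (Set.univ \ {a} : Set M) ⊆ ∅ := by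
        constructor
        · intro n f hf x hx
          exact (hempty.elim ⟨n, ⟨f, hf⟩⟩)
        · intro x hx
          exact absurd (Subsingleton.elim x a) hx.2
      exact Set.mem_sInter.1 hcl ∅ hS
    

lemma not_ramsey_finite (h2 : 1 < κ) (hfin : κ < ℵ₀) : ¬ IsRamsey κ := by
  classical
  intro hr
  have hOfin : Finite κ.ord.ToType := by
    rw [← Cardinal.mk_lt_aleph0_iff, mk_OT]
    exact hfin
  obtain ⟨H, hH, hhom⟩ := hr (fun s => decide (∃ y, ∀ x ∈ s, y < x))
  -- H = univ
  have hcompl : #(Hᶜ : Set κ.ord.ToType) = 0 := by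
    have hsum : #H + #(Hᶜ : Set κ.ord.ToType) = #κ.ord.ToType := Cardinal.mk_sum_compl H
    rw [hH, mk_OT] at hsum
    obtain ⟨n, hn⟩ := Cardinal.lt_aleph0.1 hfin
    obtain ⟨m, hm⟩ := Cardinal.lt_aleph0.1
      (lt_of_le_of_lt (le_trans (Cardinal.mk_le_mk_of_subset (Set.subset_univ Hᶜ)) (by rw [mk_univ, mk_OT])) hfin)
    have hnm : (n : Cardinal) + (m : Cardinal) = (n : Cardinal) := by
      rw [← hn, ← hm]; exact hsum
    norm_cast at hnm
    have hm0 : m = 0 := by omega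
    rw [hm, hm0]
    norm_cast
  have hHuniv : H = Set.univ := by
    rw [← Set.compl_empty_iff]
    rw [Cardinal.mk_eq_zero_iff] at hcompl
    exact Set.eq_empty_iff_forall_notMem.2 fun x hx => hcompl.elim ⟨x, hx⟩
  have hone : (1 : Cardinal) < #κ.ord.ToType := by rw [mk_OT]; exact h2
  haveI : Nontrivial κ.ord.ToType := Cardinal.one_lt_iff_nontrivial.1 hone
  haveI : Nonempty κ.ord.ToType := inferInstance
  obtain ⟨m, -, hm⟩ := wellFounded_lt.has_min (Set.univ : Set κ.ord.ToType)
    ⟨Classical.arbitrary κ.ord.ToType, trivial⟩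
  obtain ⟨b, hb⟩ := exists_ne m
  have hmb : m < b := lt_of_le_of_ne (le_of_not_gt (hm b trivial)) (Ne.symm hb)
  have h1 : decide (∃ y, ∀ x ∈ ({b} : Finset κ.ord.ToType), y < x) =
      decide (∃ y, ∀ x ∈ ({m} : Finset κ.ord.ToType), y < x) := by
    apply hhom <;> simp [hHuniv]
  rw [decide_eq_decide] at h1
  have h2' : ∃ y, ∀ x ∈ ({b} : Finset κ.ord.ToType), y < x := ⟨m, by simpa using hmb⟩
  obtain ⟨y, hy⟩ := h1.1 h2'
  exact absurd (hy m (Finset.mem_singleton_self m)) (hm y trivial)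

lemma not_ramsey_aleph0 : ¬ IsRamsey (ℵ₀ : Cardinal.{u}) := by
  classical
  intro hr
  have hfin : ∀ x : (ℵ₀ : Cardinal.{u}).ord.ToType, (Set.Iio x).Finite := fun x => by
    rw [← Set.finite_coe_iff, ← Cardinal.mk_lt_aleph0_iff]
    exact Cardinal.mk_Iio_ord_toType x
  set rank : (ℵ₀ : Cardinal.{u}).ord.ToType → ℕ := fun x => (Set.Iio x).ncard with hrankdef
  have hrank : StrictMono rank := by
    intro x y hxy
    refine Set.ncard_lt_ncard ?_ (hfin y)
    constructor
    · exact fun z hz => lt_trans hz hxy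
    · intro hsub
      exact absurd (hsub hxy) (lt_irrefl x)
  obtain ⟨H, hH, hhom⟩ := hr (fun s =>
    if h : s.Nonempty then decide (s.card ≤ rank (s.min' h)) else false)
  have hHinf : H.Infinite := by
    rw [← Set.infinite_coe_iff, infinite_iff, hH]
  obtain ⟨m, hmH, hm⟩ := wellFounded_lt.has_min H hHinf.nonempty
  set n := rank m + 1 with hn
  have hFfin : (rank ⁻¹' (Set.Iio n)).Finite :=
    Set.Finite.preimage (Set.injOn_of_injective hrank.injective) (Set.finite_Iio n)
  obtain ⟨s₂, hs₂sub, hs₂card⟩ := (hHinf.diff hFfin).exists_subset_card_eq n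
  obtain ⟨w, hwsub, hwcard⟩ := (hHinf.diff (Set.finite_singleton m)).exists_subset_card_eq (n - 1)
  set s₁ : Finset (ℵ₀ : Cardinal.{u}).ord.ToType := insert m w with hs₁
  have hmw : m ∉ w := fun hmw => (hwsub hmw).2 rfl
  have hs₁card : s₁.card = n := by
    rw [hs₁, Finset.card_insert_of_notMem hmw, hwcard]
    omega
  have hs₂ne : s₂.Nonempty := Finset.card_pos.1 (by omega)
  have hs₁ne : s₁.Nonempty := ⟨m, Finset.mem_insert_self m w⟩
  have hmin₁ : s₁.min' hs₁ne = m := by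
    refine le_antisymm (Finset.min'_le _ m (Finset.mem_insert_self m w)) ?_
    have hmem := Finset.min'_mem s₁ hs₁ne
    rcases Finset.mem_insert.1 hmem with h | h
    · rw [h]
    · exact le_of_not_gt (hm _ (hwsub h).1)
  have hc₁ : (if h : s₁.Nonempty then decide (s₁.card ≤ rank (s₁.min' h)) else false)
      = false := by
    rw [dif_pos hs₁ne, hmin₁, hs₁card]
    exact decide_eq_false (by omega)
  have hc₂ : (if h : s₂.Nonempty then decide (s₂.card ≤ rank (s₂.min' h)) else false)
      = true := by
    rw [dif_pos hs₂ne, hs₂card]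
    refine decide_eq_true ?_
    have hmem := Finset.min'_mem s₂ hs₂ne
    have h2 := (hs₂sub hmem).2
    simp only [Set.mem_preimage, Set.mem_Iio, not_lt] at h2
    exact h2
  have hkey := hhom s₁ s₂ ?_ ?_ (by rw [hs₁card, hs₂card])
  · rw [hc₁, hc₂] at hkey
    exact absurd hkey (by simp)
  · intro x hx
    rcases Finset.mem_insert.1 hx with h | h
    · rw [h]; exact hmH
    · exact (hwsub h).1
  · exact fun x hx => (hs₂sub hx).1

section MainArg

variable {M : Type u} (A : FAlg M) (g : κ.ord.ToType ≃ M) (d₀ : κ.ord.ToType)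

/-- Assignment of variables: variable `i` is sent to the `i`-th element (in increasing
order) of the finite set `s`. -/
def asgn (s : Finset κ.ord.ToType) (i : ℕ) : M :=
  g ((s.sort (· ≤ ·)).getD i d₀)

/-- `t` witnesses that the `j`-th element of `s` is generated by the other elements. -/
def Wp (s : Finset κ.ord.ToType) (j : ℕ) (t : (Lg A).Term ℕ) : Prop :=
  (∀ i ∈ t.varFinset, i < s.card ∧ i ≠ j) ∧ j < s.card ∧
    t.realize (asgn g d₀ s) = asgn g d₀ s j

open Classical in
def compW (s : Finset κ.ord.ToType) (j : ℕ) : Option ((Lg A).Term ℕ) :=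
  if h : ∃ t, Wp A g d₀ s j t then some h.choose else none

def colW (s : Finset κ.ord.ToType) : List (Option ((Lg A).Term ℕ)) :=
  List.ofFn fun j : Fin s.card => compW A g d₀ s j.val

lemma compW_spec {s : Finset κ.ord.ToType} {j : ℕ} {t₀ : (Lg A).Term ℕ}
    (h : compW A g d₀ s j = some t₀) : Wp A g d₀ s j t₀ := by
  by_cases h' : ∃ t, Wp A g d₀ s j t
  · rw [compW, dif_pos h'] at h
    have := h'.choose_spec
    rwa [Option.some.inj h] at this
  · rw [compW, dif_neg h'] at h
    exact absurd h (by simp)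

lemma compW_eq_of_col {s s' : Finset κ.ord.ToType}
    (hcol : colW A g d₀ s = colW A g d₀ s') (hcard : s.card = s'.card)
    {j : ℕ} (hj : j < s.card) : compW A g d₀ s j = compW A g d₀ s' j := by
  have h1 := congrArg (fun l => l[j]?) hcol
  simp only [colW, List.getElem?_ofFn] at h1
  rw [dif_pos hj, dif_pos (hcard ▸ hj)] at h1
  exact Option.some.inj h1

end MainArg

lemma pr_of_ramsey_big (hr : IsRamsey κ) (hinf : ℵ₀ < κ) : Pr κ := by
  classical
  intro M A hM hops
  have hOT : #κ.ord.ToType = #M := by rw [mk_OT, hM]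
  obtain ⟨g⟩ := Cardinal.eq.1 hOT
  have hOne : Nonempty κ.ord.ToType := by
    rw [← Cardinal.mk_ne_zero_iff, mk_OT]
    exact ne_of_gt (lt_of_lt_of_le aleph0_pos hinf.le)
  obtain ⟨d₀⟩ := hOne
  have hC : #(List (Option ((Lg A).Term ℕ))) < κ := by
    refine lt_of_le_of_lt (mk_list_le_max _) (max_lt hinf ?_)
    rw [mk_option]
    exact Cardinal.add_lt_of_lt hinf.le (mk_term_lt A hops hinf)
      (lt_of_lt_of_le one_lt_aleph0 hinf.le)
  obtain ⟨H, hH, hhom⟩ := exists_homog_many hr hinf.le hC (colW A g d₀)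
  have hHinf : H.Infinite := by
    rw [← Set.infinite_coe_iff, infinite_iff, hH]
    exact hinf.le
  refine ⟨g '' H, ?_, by rw [Cardinal.mk_image_eq g.injective, hH]⟩
  intro a haB hacl
  obtain ⟨t, ht⟩ := mem_cl_term A hacl
  set s : Finset κ.ord.ToType :=
    insert (g.symm a) (t.varFinset.image fun b => g.symm b.val) with hsdef
  have hmemH : ∀ x : M, x ∈ g '' H → g.symm x ∈ H := by
    intro x hx
    obtain ⟨y, hy, rfl⟩ := hx
    rwa [Equiv.symm_apply_apply]
  have hsH : ↑s ⊆ H := by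
    intro x hx
    simp only [hsdef, Finset.coe_insert, Set.mem_insert_iff, Finset.coe_image,
      Set.mem_image, Finset.mem_coe] at hx
    rcases hx with rfl | ⟨b, _, rfl⟩
    · exact hmemH a haB
    · exact hmemH b.val b.2.1
  set jn := (s.sort (· ≤ ·)).idxOf (g.symm a) with hjndef
  have hjs : g.symm a ∈ s.sort (· ≤ ·) := (Finset.mem_sort _).2 (Finset.mem_insert_self _ _)
  have hjlt : jn < s.card := by
    rw [← Finset.length_sort (α := κ.ord.ToType) (· ≤ ·)]
    exact List.idxOf_lt_length_iff.2 hjs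
  have hgetjn : (s.sort (· ≤ ·)).getD jn d₀ = g.symm a := by
    rw [List.getD_eq_getElem _ _ (by rw [Finset.length_sort]; exact hjlt)]
    exact List.getElem_idxOf _
  set ρ : ↥((g '' H) \ {a}) → ℕ := fun b => (s.sort (· ≤ ·)).idxOf (g.symm b.val) with hρdef
  have hρmem : ∀ b : ↥((g '' H) \ {a}), b ∈ t.varFinset →
      g.symm b.val ∈ s.sort (· ≤ ·) := by
    intro b hb
    exact (Finset.mem_sort _).2
      (Finset.mem_insert_of_mem (Finset.mem_image_of_mem _ hb))
  have hρget : ∀ b : ↥((g '' H) \ {a}), b ∈ t.varFinset →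
      (s.sort (· ≤ ·)).getD (ρ b) d₀ = g.symm b.val := by
    intro b hb
    rw [hρdef]
    rw [List.getD_eq_getElem _ _ (List.idxOf_lt_length_iff.2 (hρmem b hb))]
    exact List.getElem_idxOf _
  have hW : Wp A g d₀ s jn (t.relabel ρ) := by
    refine ⟨?_, hjlt, ?_⟩
    · intro i hi
      obtain ⟨b, hb, rfl⟩ := Finset.mem_image.1 (varFinset_relabel A t ρ hi)
      constructor
      · rw [← Finset.length_sort (α := κ.ord.ToType) (· ≤ ·)]
        exact List.idxOf_lt_length_iff.2 (hρmem b hb)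
      · intro hEq
        have h1 := hρget b hb
        rw [hEq, hgetjn] at h1
        exact b.2.2 (g.symm.injective h1).symm
    · rw [Term.realize_relabel]
      have hagr : ∀ b ∈ t.varFinset, (asgn g d₀ s ∘ ρ) b = Subtype.val b := by
        intro b hb
        show asgn g d₀ s (ρ b) = b.val
        rw [asgn, hρget b hb, Equiv.apply_symm_apply]
      rw [realize_agree A t hagr, ht]
      rw [asgn, hgetjn, Equiv.apply_symm_apply]
  have hex : ∃ t'', Wp A g d₀ s jn t'' := ⟨t.relabel ρ, hW⟩
  have hcomp : compW A g d₀ s jn = some hex.choose := dif_pos hex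
  obtain ⟨w, hwH, hwcard⟩ := hHinf.exists_subset_card_eq (s.card + 1)
  set e := w.orderEmbOfFin hwcard with hedef
  set j1 : Fin (s.card + 1) := ⟨jn, by omega⟩ with hj1def
  set j2 : Fin (s.card + 1) := ⟨jn + 1, by omega⟩ with hj2def
  set f₁ : Fin s.card → κ.ord.ToType := fun i => e (j2.succAbove i) with hf₁def
  set f₂ : Fin s.card → κ.ord.ToType := fun i => e (j1.succAbove i) with hf₂def
  have hf₁mono : StrictMono f₁ := fun i i' h => e.strictMono (Fin.strictMono_succAbove j2 h)
  have hf₂mono : StrictMono f₂ := fun i i' h => e.strictMono (Fin.strictMono_succAbove j1 h)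
  set s1 := Finset.image f₁ Finset.univ with hs1def
  set s2 := Finset.image f₂ Finset.univ with hs2def
  have hs1card : s1.card = s.card := by
    rw [hs1def, Finset.card_image_of_injective _ hf₁mono.injective, Finset.card_univ,
      Fintype.card_fin]
  have hs2card : s2.card = s.card := by
    rw [hs2def, Finset.card_image_of_injective _ hf₂mono.injective, Finset.card_univ,
      Fintype.card_fin]
  have hs1H : ↑s1 ⊆ H := by
    intro x hx
    simp only [hs1def, Finset.coe_image, Set.mem_image] at hx
    obtain ⟨i, _, rfl⟩ := hx
    exact hwH (Finset.orderEmbOfFin_mem w hwcard _)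
  have hs2H : ↑s2 ⊆ H := by
    intro x hx
    simp only [hs2def, Finset.coe_image, Set.mem_image] at hx
    obtain ⟨i, _, rfl⟩ := hx
    exact hwH (Finset.orderEmbOfFin_mem w hwcard _)
  have hemb1 : f₁ = ⇑(s1.orderEmbOfFin hs1card) :=
    Finset.orderEmbOfFin_unique hs1card
      (fun i => Finset.mem_image.2 ⟨i, Finset.mem_univ i, rfl⟩) hf₁mono
  have hemb2 : f₂ = ⇑(s2.orderEmbOfFin hs2card) :=
    Finset.orderEmbOfFin_unique hs2card
      (fun i => Finset.mem_image.2 ⟨i, Finset.mem_univ i, rfl⟩) hf₂mono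
  have hget1 : ∀ i (hi : i < s.card), (s1.sort (· ≤ ·)).getD i d₀ = f₁ ⟨i, hi⟩ := by
    intro i hi
    rw [List.getD_eq_getElem _ _ (by rw [Finset.length_sort, hs1card]; exact hi)]
    rw [hemb1]
    exact (Finset.orderEmbOfFin_apply s1 hs1card ⟨i, hi⟩).symm
  have hget2 : ∀ i (hi : i < s.card), (s2.sort (· ≤ ·)).getD i d₀ = f₂ ⟨i, hi⟩ := by
    intro i hi
    rw [List.getD_eq_getElem _ _ (by rw [Finset.length_sort, hs2card]; exact hi)]
    rw [hemb2]
    exact (Finset.orderEmbOfFin_apply s2 hs2card ⟨i, hi⟩).symm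
  have hcol1 : colW A g d₀ s1 = colW A g d₀ s := hhom s1 s hs1H hsH (by rw [hs1card])
  have hcol2 : colW A g d₀ s2 = colW A g d₀ s := hhom s2 s hs2H hsH (by rw [hs2card])
  have hW1 : Wp A g d₀ s1 jn hex.choose := by
    refine compW_spec A g d₀ ?_
    rw [compW_eq_of_col A g d₀ hcol1 (by rw [hs1card]) (by rw [hs1card]; exact hjlt)]
    exact hcomp
  have hW2 : Wp A g d₀ s2 jn hex.choose := by
    refine compW_spec A g d₀ ?_
    rw [compW_eq_of_col A g d₀ hcol2 (by rw [hs2card]) (by rw [hs2card]; exact hjlt)]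
    exact hcomp
  obtain ⟨hvar1, hjlt1, hre1⟩ := hW1
  obtain ⟨_, hjlt2, hre2⟩ := hW2
  have hagree12 : ∀ i ∈ (hex.choose).varFinset, asgn g d₀ s1 i = asgn g d₀ s2 i := by
    intro i hi
    obtain ⟨hilt, hine⟩ := hvar1 i hi
    rw [hs1card] at hilt
    rw [asgn, asgn, hget1 i hilt, hget2 i hilt]
    have hsA : j2.succAbove ⟨i, hilt⟩ = j1.succAbove ⟨i, hilt⟩ := by
      rcases lt_or_gt_of_ne hine with h | h
      · rw [Fin.succAbove_of_castSucc_lt j2 _ (by simp only [hj2def, Fin.lt_def, Fin.castSucc_mk]; omega),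
          Fin.succAbove_of_castSucc_lt j1 _ (by simp only [hj1def, Fin.lt_def, Fin.castSucc_mk]; omega)]
      · rw [Fin.succAbove_of_le_castSucc j2 _ (by simp only [hj2def, Fin.le_def, Fin.castSucc_mk]; omega),
          Fin.succAbove_of_le_castSucc j1 _ (by simp only [hj1def, Fin.le_def, Fin.castSucc_mk]; omega)]
    congr 1
    show e (j2.succAbove ⟨i, hilt⟩) = e (j1.succAbove ⟨i, hilt⟩)
    rw [hsA]
  have hreal := realize_agree A hex.choose hagree12
  rw [hre1, hre2] at hreal
  rw [asgn, asgn, hget1 jn hjlt, hget2 jn hjlt] at hreal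
  have heq := g.injective hreal
  have heq2 : e (j2.succAbove ⟨jn, hjlt⟩) = e (j1.succAbove ⟨jn, hjlt⟩) := heq
  rw [Fin.succAbove_of_castSucc_lt j2 _
      (by simp only [hj2def, Fin.lt_def, Fin.castSucc_mk]; omega),
    Fin.succAbove_of_le_castSucc j1 _
      (by simp only [hj1def, Fin.le_def, Fin.castSucc_mk]; omega)] at heq2
  have hfin := e.injective heq2
  rw [Fin.ext_iff] at hfin
  simp only [Fin.castSucc_mk, Fin.succ_mk] at hfin
  omega

end
end FSP

/-- If `κ` is Ramsey then `Pr κ` holds. -/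
theorem stmt_14 (κ : Cardinal.{u}) (hκ : IsRamsey κ) : Pr κ := by
  rcases le_or_gt κ 1 with h1 | h1
  · exact FSP.pr_of_le_one h1
  rcases lt_trichotomy κ ℵ₀ with hlt | heq | hgt
  · exact absurd hκ (FSP.not_ramsey_finite h1 hlt)
  · rw [heq] at hκ
    exact absurd hκ FSP.not_ramsey_aleph0
  · exact FSP.pr_of_ramsey_big hκ hgt
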